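/- Let p, q, r, γ : ℝ × ℝ → ℝ be smooth functions of (t,x), all 1-periodic in x, satisfying γ_xx − γ = (1/2)(q − r) − p_x for all (t,x). Then for every t: ∫₀¹ [2·p_t·(γ_x + p) − γ·r_t + γ·q_t] dx = (d/dt) ∫₀¹ (p² − γ² − γ_x²) dx. -/

import Mathlib

open MeasureTheory

/-- Partial derivative in the first variable `t` of a function of `(t,x)`. -/
noncomputable def Dt (f : ℝ × ℝ → ℝ) : ℝ × ℝ → ℝ :=
  fun z => deriv (fun s => f (s, z.2)) z.1

/-- Partial derivative in the second variable `x` of a function of `(t,x)`. -/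
noncomputable def Dx (f : ℝ × ℝ → ℝ) : ℝ × ℝ → ℝ :=
  fun z => deriv (fun y => f (z.1, y)) z.2

/-- 1-periodicity in the second variable `x`. -/
def PeriodicX (f : ℝ × ℝ → ℝ) : Prop := ∀ t x : ℝ, f (t, x + 1) = f (t, x)

section Aux

open Metric Set Filter

lemma aux_one_le_top : ((⊤ : ℕ∞) : WithTop ℕ∞) ≠ 0 := by
  simp

lemma aux_top_add_one_le : ((⊤ : ℕ∞) : WithTop ℕ∞) + 1 ≤ ((⊤ : ℕ∞) : WithTop ℕ∞) := by
  exact_mod_cast le_top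

/-- slice in `x` has derivative given by the full `fderiv`. -/
lemma hasDerivAt_slice_x {E : Type*} [NormedAddCommGroup E] [NormedSpace ℝ E]
    (f : ℝ × ℝ → E) (hf : Differentiable ℝ f) (t x : ℝ) :
    HasDerivAt (fun y => f (t, y)) (fderiv ℝ f (t, x) ((0 : ℝ), (1 : ℝ))) x := by
  have h1 : HasDerivAt (fun y : ℝ => ((t, y) : ℝ × ℝ)) (((0 : ℝ), (1 : ℝ))) x :=
    (hasDerivAt_const x t).prodMk (hasDerivAt_id x)
  exact ((hf (t, x)).hasFDerivAt.comp_hasDerivAt x h1)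

lemma hasDerivAt_slice_t {E : Type*} [NormedAddCommGroup E] [NormedSpace ℝ E]
    (f : ℝ × ℝ → E) (hf : Differentiable ℝ f) (t x : ℝ) :
    HasDerivAt (fun s => f (s, x)) (fderiv ℝ f (t, x) ((1 : ℝ), (0 : ℝ))) t := by
  have h1 : HasDerivAt (fun s : ℝ => ((s, x) : ℝ × ℝ)) (((1 : ℝ), (0 : ℝ))) t :=
    (hasDerivAt_id t).prodMk (hasDerivAt_const t x)
  exact ((hf (t, x)).hasFDerivAt.comp_hasDerivAt t h1)

lemma Dx_eq_fderiv (f : ℝ × ℝ → ℝ) (hf : Differentiable ℝ f) (t x : ℝ) :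
    Dx f (t, x) = fderiv ℝ f (t, x) ((0 : ℝ), (1 : ℝ)) :=
  (hasDerivAt_slice_x f hf t x).deriv

lemma Dt_eq_fderiv (f : ℝ × ℝ → ℝ) (hf : Differentiable ℝ f) (t x : ℝ) :
    Dt f (t, x) = fderiv ℝ f (t, x) ((1 : ℝ), (0 : ℝ)) :=
  (hasDerivAt_slice_t f hf t x).deriv

lemma hasDerivAt_Dx (f : ℝ × ℝ → ℝ) (hf : Differentiable ℝ f) (t x : ℝ) :
    HasDerivAt (fun y => f (t, y)) (Dx f (t, x)) x := by
  rw [Dx_eq_fderiv f hf]; exact hasDerivAt_slice_x f hf t x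

lemma hasDerivAt_Dt (f : ℝ × ℝ → ℝ) (hf : Differentiable ℝ f) (t x : ℝ) :
    HasDerivAt (fun s => f (s, x)) (Dt f (t, x)) t := by
  rw [Dt_eq_fderiv f hf]; exact hasDerivAt_slice_t f hf t x

lemma contDiff_Dx (f : ℝ × ℝ → ℝ) (hf : ContDiff ℝ (⊤ : ℕ∞) f) :
    ContDiff ℝ (⊤ : ℕ∞) (Dx f) := by
  have h : Dx f = fun z => fderiv ℝ f z ((0 : ℝ), (1 : ℝ)) := by
    funext z
    exact Dx_eq_fderiv f (hf.differentiable aux_one_le_top) z.1 z.2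
  rw [h]
  exact (hf.fderiv_right aux_top_add_one_le).clm_apply contDiff_const

lemma contDiff_Dt (f : ℝ × ℝ → ℝ) (hf : ContDiff ℝ (⊤ : ℕ∞) f) :
    ContDiff ℝ (⊤ : ℕ∞) (Dt f) := by
  have h : Dt f = fun z => fderiv ℝ f z ((1 : ℝ), (0 : ℝ)) := by
    funext z
    exact Dt_eq_fderiv f (hf.differentiable aux_one_le_top) z.1 z.2
  rw [h]
  exact (hf.fderiv_right aux_top_add_one_le).clm_apply contDiff_const

/-- mixed partials commute for smooth functions. -/
lemma Dt_Dx_comm (f : ℝ × ℝ → ℝ) (hf : ContDiff ℝ (⊤ : ℕ∞) f) (t x : ℝ) :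
    Dt (Dx f) (t, x) = Dx (Dt f) (t, x) := by
  have hdf : Differentiable ℝ f := hf.differentiable aux_one_le_top
  have hf' : ContDiff ℝ (⊤ : ℕ∞) (fderiv ℝ f) := hf.fderiv_right aux_top_add_one_le
  have hdf' : Differentiable ℝ (fderiv ℝ f) := hf'.differentiable aux_one_le_top
  set f'' := fderiv ℝ (fderiv ℝ f) (t, x) with hf''
  have hsymm : f'' ((0 : ℝ), (1 : ℝ)) ((1 : ℝ), (0 : ℝ))
      = f'' ((1 : ℝ), (0 : ℝ)) ((0 : ℝ), (1 : ℝ)) :=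
    second_derivative_symmetric (fun y => (hdf y).hasFDerivAt)
      (hdf' (t, x)).hasFDerivAt _ _
  have e1 : Dt (Dx f) (t, x) = f'' ((1 : ℝ), (0 : ℝ)) ((0 : ℝ), (1 : ℝ)) := by
    have hfun : (fun s => Dx f (s, x)) = fun s => fderiv ℝ f (s, x) ((0 : ℝ), (1 : ℝ)) := by
      funext s; exact Dx_eq_fderiv f hdf s x
    have h1 : HasDerivAt (fun s => fderiv ℝ f (s, x))
        (f'' ((1 : ℝ), (0 : ℝ))) t := hasDerivAt_slice_t (fderiv ℝ f) hdf' t x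
    have h2 : HasDerivAt (fun s => fderiv ℝ f (s, x) ((0 : ℝ), (1 : ℝ)))
        (f'' ((1 : ℝ), (0 : ℝ)) ((0 : ℝ), (1 : ℝ))) t := by
      have := h1.clm_apply (hasDerivAt_const t (((0 : ℝ), (1 : ℝ)) : ℝ × ℝ))
      simpa using this
    show deriv (fun s => Dx f (s, x)) t = _
    rw [hfun]
    exact h2.deriv
  have e2 : Dx (Dt f) (t, x) = f'' ((0 : ℝ), (1 : ℝ)) ((1 : ℝ), (0 : ℝ)) := by
    have hfun : (fun y => Dt f (t, y)) = fun y => fderiv ℝ f (t, y) ((1 : ℝ), (0 : ℝ)) := by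
      funext y; exact Dt_eq_fderiv f hdf t y
    have h1 : HasDerivAt (fun y => fderiv ℝ f (t, y))
        (f'' ((0 : ℝ), (1 : ℝ))) x := hasDerivAt_slice_x (fderiv ℝ f) hdf' t x
    have h2 : HasDerivAt (fun y => fderiv ℝ f (t, y) ((1 : ℝ), (0 : ℝ)))
        (f'' ((0 : ℝ), (1 : ℝ)) ((1 : ℝ), (0 : ℝ))) x := by
      have := h1.clm_apply (hasDerivAt_const x (((1 : ℝ), (0 : ℝ)) : ℝ × ℝ))
      simpa using this
    show deriv (fun y => Dt f (t, y)) x = _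
    rw [hfun]
    exact h2.deriv
  rw [e1, e2, hsymm]

lemma PeriodicX.dx {f : ℝ × ℝ → ℝ} (h : PeriodicX f) : PeriodicX (Dx f) := by
  intro t x
  show deriv (fun y => f (t, y)) (x + 1) = deriv (fun y => f (t, y)) x
  have h2 : (fun y => f (t, y + 1)) = fun y => f (t, y) := funext fun y => h t y
  calc deriv (fun y => f (t, y)) (x + 1)
      = deriv (fun y => f (t, y + 1)) x := (deriv_comp_add_const _ 1 x).symm
    _ = deriv (fun y => f (t, y)) x := by rw [h2]

lemma PeriodicX.dt {f : ℝ × ℝ → ℝ} (h : PeriodicX f) : PeriodicX (Dt f) := by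
  intro t x
  show deriv (fun s => f (s, x + 1)) t = deriv (fun s => f (s, x)) t
  congr 1
  funext s
  exact h s x

/-- differentiation under the interval integral for smooth integrands. -/
lemma hasDerivAt_param_integral (G : ℝ × ℝ → ℝ) (hG : ContDiff ℝ (⊤ : ℕ∞) G) (t : ℝ) :
    HasDerivAt (fun s => ∫ x in (0:ℝ)..1, G (s, x)) (∫ x in (0:ℝ)..1, Dt G (t, x)) t := by
  have hdG : Differentiable ℝ G := hG.differentiable aux_one_le_top
  have hDtc : Continuous (Dt G) := (contDiff_Dt G hG).continuous
  obtain ⟨C, hC⟩ : ∃ C, ∀ z ∈ (Icc (t - 1) (t + 1) ×ˢ Icc (0:ℝ) 1), ‖Dt G z‖ ≤ C :=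
    (isCompact_Icc.prod isCompact_Icc).exists_bound_of_continuousOn hDtc.continuousOn
  have key := intervalIntegral.hasDerivAt_integral_of_dominated_loc_of_deriv_le
    (F := fun s x => G (s, x)) (F' := fun s x => Dt G (s, x)) (bound := fun _ => C)
    (μ := volume) (a := (0:ℝ)) (b := 1) (x₀ := t) (s := Metric.ball t 1) (Metric.ball_mem_nhds t one_pos)
    (Eventually.of_forall fun s =>
      ((hG.continuous.comp (continuous_const.prodMk continuous_id)).aestronglyMeasurable))
    ((hG.continuous.comp (continuous_const.prodMk continuous_id)).intervalIntegrable 0 1)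
    ((hDtc.comp (continuous_const.prodMk continuous_id)).aestronglyMeasurable)
    (Eventually.of_forall fun x hx => fun s hs => by
      apply hC
      have hs' : |s - t| < 1 := by simpa [Real.dist_eq] using hs
      obtain ⟨h1, h2⟩ := abs_lt.1 hs'
      have hx' : x ∈ Icc (0:ℝ) 1 := by
        rw [uIoc_of_le (by norm_num : (0:ℝ) ≤ 1)] at hx
        exact Ioc_subset_Icc_self hx
      exact ⟨⟨by linarith, by linarith⟩, hx'⟩)
    (by exact (continuous_const (y := C)).intervalIntegrable 0 1)
    (Eventually.of_forall fun x hx => fun s hs => hasDerivAt_Dt G hdG s x)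
  exact key.2

end Aux

theorem pairing_dH2_eq_time_deriv_H2 (p q r γ : ℝ × ℝ → ℝ)
    (hp : ContDiff ℝ (⊤ : ℕ∞) p) (hq : ContDiff ℝ (⊤ : ℕ∞) q)
    (hr : ContDiff ℝ (⊤ : ℕ∞) r) (hγ : ContDiff ℝ (⊤ : ℕ∞) γ)
    (hpper : PeriodicX p) (hqper : PeriodicX q)
    (hrper : PeriodicX r) (hγper : PeriodicX γ)
    (hγeq : ∀ t x : ℝ,
      Dx (Dx γ) (t, x) - γ (t, x) = (1/2) * (q (t, x) - r (t, x)) - Dx p (t, x)) :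
    ∀ t : ℝ,
      (∫ x in (0:ℝ)..1,
        (2 * Dt p (t, x) * (Dx γ (t, x) + p (t, x))
          - γ (t, x) * Dt r (t, x) + γ (t, x) * Dt q (t, x))) =
      deriv (fun s => ∫ x in (0:ℝ)..1,
        (p (s, x) ^ 2 - γ (s, x) ^ 2 - (Dx γ (s, x)) ^ 2)) t := by
  intro t
  have hdγ : Differentiable ℝ γ := hγ.differentiable aux_one_le_top
  have hDxγ : ContDiff ℝ (⊤ : ℕ∞) (Dx γ) := contDiff_Dx γ hγ
  have hDtγ : ContDiff ℝ (⊤ : ℕ∞) (Dt γ) := contDiff_Dt γ hγ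
  have hDtp : ContDiff ℝ (⊤ : ℕ∞) (Dt p) := contDiff_Dt p hp
  have hDxDtγ : ContDiff ℝ (⊤ : ℕ∞) (Dx (Dt γ)) := contDiff_Dx _ hDtγ
  set G : ℝ × ℝ → ℝ := fun z => p z ^ 2 - γ z ^ 2 - (Dx γ z) ^ 2 with hGdef
  set W : ℝ × ℝ → ℝ := fun z => 2 * γ z * (Dt p z + Dx (Dt γ) z) with hWdef
  have hGsm : ContDiff ℝ (⊤ : ℕ∞) G := ((hp.pow 2).sub (hγ.pow 2)).sub (hDxγ.pow 2)
  have hWsm : ContDiff ℝ (⊤ : ℕ∞) W := (contDiff_const.mul hγ).mul (hDtp.add hDxDtγ)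
  -- mixed partials commute
  have hcomm1 : Dt (Dx γ) = Dx (Dt γ) := funext fun z => Dt_Dx_comm γ hγ z.1 z.2
  have hcomm2 : ∀ x : ℝ, Dt (Dx (Dx γ)) (t, x) = Dx (Dx (Dt γ)) (t, x) := fun x => by
    rw [Dt_Dx_comm (Dx γ) hDxγ t x, hcomm1]
  have hcomm3 : ∀ x : ℝ, Dt (Dx p) (t, x) = Dx (Dt p) (t, x) := fun x =>
    Dt_Dx_comm p hp t x
  -- the constraint, differentiated in time
  have hcon : ∀ x : ℝ, Dt q (t, x) - Dt r (t, x)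
      = 2 * (Dx (Dx (Dt γ)) (t, x) - Dt γ (t, x) + Dx (Dt p) (t, x)) := by
    intro x
    have hA := hasDerivAt_Dt (Dx (Dx γ)) ((contDiff_Dx _ hDxγ).differentiable aux_one_le_top) t x
    have hB := hasDerivAt_Dt γ hdγ t x
    have hQ := hasDerivAt_Dt q (hq.differentiable aux_one_le_top) t x
    have hR := hasDerivAt_Dt r (hr.differentiable aux_one_le_top) t x
    have hP := hasDerivAt_Dt (Dx p) ((contDiff_Dx p hp).differentiable aux_one_le_top) t x
    have hL : HasDerivAt (fun s => Dx (Dx γ) (s, x) - γ (s, x))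
        (Dt (Dx (Dx γ)) (t, x) - Dt γ (t, x)) t := hA.sub hB
    have hRd : HasDerivAt (fun s => (1/2) * (q (s, x) - r (s, x)) - Dx p (s, x))
        ((1/2) * (Dt q (t, x) - Dt r (t, x)) - Dt (Dx p) (t, x)) t :=
      ((hQ.sub hR).const_mul _).sub hP
    have hfun : (fun s => Dx (Dx γ) (s, x) - γ (s, x))
        = fun s => (1/2) * (q (s, x) - r (s, x)) - Dx p (s, x) :=
      funext fun s => hγeq s x
    rw [hfun] at hL
    have huniq := hL.unique hRd
    rw [hcomm2 x, hcomm3 x] at huniq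
    linarith
  -- pointwise identity for the integrands
  have hpoint : ∀ x : ℝ,
      2 * Dt p (t, x) * (Dx γ (t, x) + p (t, x)) - γ (t, x) * Dt r (t, x)
        + γ (t, x) * Dt q (t, x)
      = Dt G (t, x) + Dx W (t, x) := by
    intro x
    have hDtG : Dt G (t, x) = 2 * p (t, x) * Dt p (t, x) - 2 * γ (t, x) * Dt γ (t, x)
        - 2 * Dx γ (t, x) * Dt (Dx γ) (t, x) := by
      have h1 := hasDerivAt_Dt p (hp.differentiable aux_one_le_top) t x
      have h2 := hasDerivAt_Dt γ hdγ t x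
      have h3 := hasDerivAt_Dt (Dx γ) (hDxγ.differentiable aux_one_le_top) t x
      have h4 : HasDerivAt (fun s => G (s, x))
          (2 * p (t, x) * Dt p (t, x) - 2 * γ (t, x) * Dt γ (t, x)
            - 2 * Dx γ (t, x) * Dt (Dx γ) (t, x)) t := by
        simp only [hGdef]
        refine (((h1.pow 2).sub (h2.pow 2)).sub (h3.pow 2)).congr_deriv ?_
        try push_cast
        try ring
        try norm_num
      exact h4.deriv
    have hDxW : Dx W (t, x) = 2 * Dx γ (t, x) * (Dt p (t, x) + Dx (Dt γ) (t, x))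
        + 2 * γ (t, x) * (Dx (Dt p) (t, x) + Dx (Dx (Dt γ)) (t, x)) := by
      have h1 := hasDerivAt_Dx γ hdγ t x
      have h2 := hasDerivAt_Dx (Dt p) (hDtp.differentiable aux_one_le_top) t x
      have h3 := hasDerivAt_Dx (Dx (Dt γ)) (hDxDtγ.differentiable aux_one_le_top) t x
      have h4 : HasDerivAt (fun y => W (t, y))
          (2 * Dx γ (t, x) * (Dt p (t, x) + Dx (Dt γ) (t, x))
            + 2 * γ (t, x) * (Dx (Dt p) (t, x) + Dx (Dx (Dt γ)) (t, x))) x := by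
        simp only [hWdef]
        refine ((HasDerivAt.const_mul (2:ℝ) h1).mul (h2.add h3)).congr_deriv ?_
        simp only [Pi.add_apply]
        try ring
      exact h4.deriv
    rw [hDtG, hDxW, hcomm1]
    linear_combination γ (t, x) * hcon x
  have cDtG : Continuous fun x => Dt G (t, x) :=
    (contDiff_Dt G hGsm).continuous.comp (continuous_const.prodMk continuous_id)
  have cDxW : Continuous fun x => Dx W (t, x) :=
    (contDiff_Dx W hWsm).continuous.comp (continuous_const.prodMk continuous_id)
  -- the integral of Dx W vanishes by periodicity
  have hWzero : ∫ x in (0:ℝ)..1, Dx W (t, x) = 0 := by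
    have hWd : Differentiable ℝ W := hWsm.differentiable aux_one_le_top
    have hFTC := intervalIntegral.integral_eq_sub_of_hasDerivAt
      (f := fun y => W (t, y)) (f' := fun x => Dx W (t, x))
      (fun x _ => hasDerivAt_Dx W hWd t x) (cDxW.intervalIntegrable 0 1)
    rw [hFTC]
    have hper : W (t, 0 + 1) = W (t, 0) := by
      simp only [hWdef]
      rw [hγper t 0, hpper.dt t 0, (hγper.dt).dx t 0]
    have hW1 : W (t, 1) = W (t, 0) := by
      rw [show (1:ℝ) = 0 + 1 by norm_num]
      exact hper
    show W (t, 1) - W (t, 0) = 0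
    rw [hW1]
    ring
  rw [intervalIntegral.integral_congr
    (g := fun x => Dt G (t, x) + Dx W (t, x)) (fun x _ => hpoint x)]
  rw [intervalIntegral.integral_add (cDtG.intervalIntegrable 0 1)
    (cDxW.intervalIntegrable 0 1), hWzero, add_zero]
  exact ((hasDerivAt_param_integral G hGsm t).deriv).symm
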